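/- There exists a constant $C>0$ such that for all $\lambda>0$, $t>0$, $\bar s>0$, and all real $h$ with $0<|h|\le \bar s/2$: $\left| E'_{\lambda,t}(\bar s + h) - E'_{\lambda,t}(\bar s) - h\, E''_{\lambda,t}(\bar s) \right| \le C\, \frac{h^2}{\bar s^{3}}\left(1 + |\ln t|^3\right)$, where $E_{\lambda,t}(s) := e^{-\lambda^s t}$ and $E'_{\lambda,t}$, $E''_{\lambda,t}$ denote its first and second derivatives with respect to $s$. -/

import Mathlib

/-- `u ^ n * exp (-u) ≤ n ^ n` for `u ≥ 0`, `n ≥ 1`. -/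
lemma aux_pow_mul_exp_neg_le (n : ℕ) (hn : 0 < n) (u : ℝ) (hu : 0 ≤ u) :
    u ^ n * Real.exp (-u) ≤ (n : ℝ) ^ n := by
  have hn' : (0:ℝ) < n := by exact_mod_cast hn
  have h1 : u / n ≤ Real.exp (u / n) := by
    have := Real.add_one_le_exp (u / n)
    have : (0:ℝ) ≤ u / n := by positivity
    linarith [Real.add_one_le_exp (u / n)]
  have h2 : (u / n) ^ n ≤ Real.exp (u / n) ^ n :=
    pow_le_pow_left₀ (by positivity) h1 n
  have h3 : Real.exp (u / n) ^ n = Real.exp u := by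
    rw [← Real.exp_nat_mul]
    congr 1
    field_simp
  rw [h3, div_pow, div_le_iff₀ (by positivity)] at h2
  have h4 : u ^ n * Real.exp (-u) ≤ ((n:ℝ)^n * Real.exp u) * Real.exp (-u) := by
    have := Real.exp_pos (-u)
    nlinarith
  rw [mul_assoc, ← Real.exp_add] at h4
  simpa using h4

/-- `u * |log u| ^ 3 ≤ 27` for `0 < u ≤ 1`. -/
lemma aux_small_log (u : ℝ) (hu : 0 < u) (hu1 : u ≤ 1) : u * |Real.log u| ^ 3 ≤ 27 := by
  set v : ℝ := u⁻¹ with hv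
  have hv1 : 1 ≤ v := one_le_inv_iff₀.mpr ⟨hu, hu1⟩
  have hvpos : 0 < v := by positivity
  have hlog : |Real.log u| = Real.log v := by
    rw [hv, Real.log_inv, abs_of_nonpos (Real.log_nonpos hu.le hu1)]
  -- log v ≤ 3 * v ^ (1/3)
  have hcube : (v ^ ((1:ℝ)/3)) ^ (3:ℕ) = v := by
    rw [← Real.rpow_natCast (v ^ ((1:ℝ)/3)) 3, ← Real.rpow_mul hvpos.le]
    norm_num
  have h13 : Real.log (v ^ ((1:ℝ)/3)) = (1/3) * Real.log v := Real.log_rpow hvpos _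
  have hle : Real.log (v ^ ((1:ℝ)/3)) ≤ v ^ ((1:ℝ)/3) := by
    have := Real.log_le_sub_one_of_pos (Real.rpow_pos_of_pos hvpos ((1:ℝ)/3))
    linarith
  have hlv : Real.log v ≤ 3 * v ^ ((1:ℝ)/3) := by
    rw [h13] at hle; linarith
  have hlognn : 0 ≤ Real.log v := Real.log_nonneg hv1
  have h3 : Real.log v ^ (3:ℕ) ≤ (3 * v ^ ((1:ℝ)/3)) ^ (3:ℕ) :=
    pow_le_pow_left₀ hlognn hlv 3
  have h4 : (3 * v ^ ((1:ℝ)/3)) ^ (3:ℕ) = 27 * v := by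
    rw [mul_pow, hcube]; norm_num
  rw [hlog]
  have huv : u * v = 1 := by rw [hv]; exact mul_inv_cancel₀ hu.ne'
  nlinarith [h3, h4, hlognn]

/-- Pointwise bound: `|log u - b|³ (u³+3u²+u) e^{-u} ≤ 250000 (1+|b|³)`. -/
lemma aux_key (u b : ℝ) (hu : 0 < u) :
    |Real.log u - b| ^ 3 * ((u ^ 3 + 3 * u ^ 2 + u) * Real.exp (-u))
      ≤ 250000 * (1 + |b| ^ 3) := by
  have e1 : u * Real.exp (-u) ≤ (1:ℝ) := by
    simpa using aux_pow_mul_exp_neg_le 1 one_pos u hu.le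
  have e2 : u ^ 2 * Real.exp (-u) ≤ (4:ℝ) := by
    have := aux_pow_mul_exp_neg_le 2 (by norm_num) u hu.le; norm_num at this; linarith
  have e3 : u ^ 3 * Real.exp (-u) ≤ (27:ℝ) := by
    have := aux_pow_mul_exp_neg_le 3 (by norm_num) u hu.le; norm_num at this; linarith
  have e4 : u ^ 4 * Real.exp (-u) ≤ (256:ℝ) := by
    have := aux_pow_mul_exp_neg_le 4 (by norm_num) u hu.le; norm_num at this; linarith
  have e5 : u ^ 5 * Real.exp (-u) ≤ (3125:ℝ) := by
    have := aux_pow_mul_exp_neg_le 5 (by norm_num) u hu.le; norm_num at this; linarith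
  have e6 : u ^ 6 * Real.exp (-u) ≤ (46656:ℝ) := by
    have := aux_pow_mul_exp_neg_le 6 (by norm_num) u hu.le; norm_num at this; linarith
  have hexp : (0:ℝ) < Real.exp (-u) := Real.exp_pos _
  have hψ0 : 0 ≤ (u ^ 3 + 3 * u ^ 2 + u) * Real.exp (-u) := by positivity
  have hψ40 : (u ^ 3 + 3 * u ^ 2 + u) * Real.exp (-u) ≤ 40 := by nlinarith
  -- |log u - b|³ ≤ 4(|log u|³ + |b|³)
  have htri : |Real.log u - b| ≤ |Real.log u| + |b| := abs_sub _ _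
  have habs : |Real.log u - b| ^ 3 ≤ 4 * (|Real.log u| ^ 3 + |b| ^ 3) := by
    have hc : |Real.log u - b| ^ 3 ≤ (|Real.log u| + |b|) ^ 3 :=
      pow_le_pow_left₀ (abs_nonneg _) htri 3
    nlinarith [abs_nonneg (Real.log u), abs_nonneg b,
      mul_nonneg (add_nonneg (abs_nonneg (Real.log u)) (abs_nonneg b))
        (sq_nonneg (|Real.log u| - |b|))]
  -- |log u|³ ψ(u) ≤ 56287
  have hlogpart : |Real.log u| ^ 3 * ((u ^ 3 + 3 * u ^ 2 + u) * Real.exp (-u)) ≤ 56287 := by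
    rcases le_or_gt u 1 with h1 | h1
    · have hsmall := aux_small_log u hu h1
      have hψ5u : (u ^ 3 + 3 * u ^ 2 + u) * Real.exp (-u) ≤ 5 * u := by
        have hexple : Real.exp (-u) ≤ 1 := Real.exp_le_one_iff.mpr (by linarith)
        nlinarith [sq_nonneg u, hu.le]
      have h0 : 0 ≤ |Real.log u| ^ 3 := by positivity
      nlinarith
    · have hl0 : 0 ≤ Real.log u := Real.log_nonneg h1.le
      have hlu : Real.log u ≤ u := by
        have := Real.log_le_sub_one_of_pos hu; linarith
      have habs' : |Real.log u| ^ 3 ≤ u ^ 3 := by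
        rw [abs_of_nonneg hl0]; exact pow_le_pow_left₀ hl0 hlu 3
      have : |Real.log u| ^ 3 * ((u ^ 3 + 3 * u ^ 2 + u) * Real.exp (-u))
          ≤ u ^ 3 * ((u ^ 3 + 3 * u ^ 2 + u) * Real.exp (-u)) := by
        exact mul_le_mul_of_nonneg_right habs' hψ0
      calc |Real.log u| ^ 3 * ((u ^ 3 + 3 * u ^ 2 + u) * Real.exp (-u))
          ≤ u ^ 3 * ((u ^ 3 + 3 * u ^ 2 + u) * Real.exp (-u)) := this
        _ = u ^ 6 * Real.exp (-u) + 3 * (u ^ 5 * Real.exp (-u)) + u ^ 4 * Real.exp (-u) := by ring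
        _ ≤ 46656 + 3 * 3125 + 256 := by linarith
        _ ≤ 56287 := by norm_num
  have hb0 : 0 ≤ |b| ^ 3 := by positivity
  nlinarith [mul_le_mul_of_nonneg_right habs hψ0, mul_le_mul_of_nonneg_left hψ40 hb0]

noncomputable def auxW (t L σ : ℝ) : ℝ := t * Real.exp (L * σ)

noncomputable def auxF1 (t L σ : ℝ) : ℝ := -(L * auxW t L σ) * Real.exp (-(auxW t L σ))

noncomputable def auxF2 (t L σ : ℝ) : ℝ :=
  L ^ 2 * (auxW t L σ * (auxW t L σ - 1)) * Real.exp (-(auxW t L σ))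

noncomputable def auxF3 (t L σ : ℝ) : ℝ :=
  L ^ 3 * (auxW t L σ * (3 * auxW t L σ - 1 - auxW t L σ ^ 2)) * Real.exp (-(auxW t L σ))

lemma auxW_pos (t L σ : ℝ) (ht : 0 < t) : 0 < auxW t L σ := by
  unfold auxW; positivity

lemma auxW_hasDeriv (t L σ : ℝ) : HasDerivAt (auxW t L) (L * auxW t L σ) σ := by
  have h1 : HasDerivAt (fun σ : ℝ => L * σ) L σ := by
    simpa using (hasDerivAt_id σ).const_mul L
  have h2 := (h1.exp).const_mul t
  refine h2.congr_deriv ?_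
  unfold auxW; ring

lemma auxF_hasDeriv (t L σ : ℝ) :
    HasDerivAt (fun σ => Real.exp (-(auxW t L σ))) (auxF1 t L σ) σ := by
  have := ((auxW_hasDeriv t L σ).neg).exp
  refine this.congr_deriv ?_
  unfold auxF1; simp only [Pi.neg_apply]; ring

lemma auxF1_hasDeriv (t L σ : ℝ) : HasDerivAt (auxF1 t L) (auxF2 t L σ) σ := by
  have ha : HasDerivAt (fun σ => -(L * auxW t L σ)) (-(L * (L * auxW t L σ))) σ :=
    ((auxW_hasDeriv t L σ).const_mul L).neg
  have hb : HasDerivAt (fun σ => Real.exp (-(auxW t L σ)))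
      (Real.exp (-(auxW t L σ)) * -(L * auxW t L σ)) σ := ((auxW_hasDeriv t L σ).neg).exp
  have := ha.mul hb
  refine this.congr_deriv ?_
  unfold auxF2; ring

lemma auxF2_hasDeriv (t L σ : ℝ) : HasDerivAt (auxF2 t L) (auxF3 t L σ) σ := by
  have ha : HasDerivAt (fun σ => L ^ 2 * (auxW t L σ * (auxW t L σ - 1)))
      (L ^ 2 * ((L * auxW t L σ) * (auxW t L σ - 1) + auxW t L σ * (L * auxW t L σ))) σ :=
    ((auxW_hasDeriv t L σ).mul ((auxW_hasDeriv t L σ).sub_const 1)).const_mul (L ^ 2)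
  have hb : HasDerivAt (fun σ => Real.exp (-(auxW t L σ)))
      (Real.exp (-(auxW t L σ)) * -(L * auxW t L σ)) σ := ((auxW_hasDeriv t L σ).neg).exp
  have := ha.mul hb
  refine this.congr_deriv ?_
  unfold auxF3; ring

/-- The key bound on the third derivative: `|F3(x)| x³ ≤ 250000 (1 + |log t|³)`. -/
lemma auxF3_bound (t L x : ℝ) (ht : 0 < t) (hx : 0 < x) :
    |auxF3 t L x| * x ^ 3 ≤ 250000 * (1 + |Real.log t| ^ 3) := by
  set u : ℝ := auxW t L x with hu
  have hupos : 0 < u := auxW_pos t L x ht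
  have hlogu : Real.log u = Real.log t + L * x := by
    rw [hu]; unfold auxW
    rw [Real.log_mul (ne_of_gt ht) (ne_of_gt (Real.exp_pos _)), Real.log_exp]
  have hLx : L * x = Real.log u - Real.log t := by linarith
  have h1 : |auxF3 t L x| ≤ |L| ^ 3 * ((u ^ 3 + 3 * u ^ 2 + u) * Real.exp (-u)) := by
    have heq : |auxF3 t L x| = |L| ^ 3 * (u * |3 * u - 1 - u ^ 2|) * Real.exp (-u) := by
      unfold auxF3
      rw [abs_mul, abs_mul, abs_pow, abs_mul, ← hu, abs_of_nonneg hupos.le,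
        abs_of_nonneg (Real.exp_pos _).le]
    rw [heq]
    have h2 : |3 * u - 1 - u ^ 2| ≤ u ^ 2 + 3 * u + 1 := by
      rw [abs_le]; constructor <;> nlinarith [sq_nonneg u]
    have h3 : u * |3 * u - 1 - u ^ 2| ≤ u ^ 3 + 3 * u ^ 2 + u := by
      nlinarith [abs_nonneg (3 * u - 1 - u ^ 2)]
    have h4 : (0:ℝ) ≤ |L| ^ 3 := by positivity
    have h5 : (0:ℝ) < Real.exp (-u) := Real.exp_pos _
    nlinarith [mul_le_mul_of_nonneg_left h3 h4]
  have hLcube : |L| ^ 3 * x ^ 3 = |Real.log u - Real.log t| ^ 3 := by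
    rw [← hLx, abs_mul, mul_pow, abs_of_nonneg hx.le]
  have hkey := aux_key u (Real.log t) hupos
  have hψ0 : 0 ≤ (u ^ 3 + 3 * u ^ 2 + u) * Real.exp (-u) := by positivity
  have hx3 : (0:ℝ) ≤ x ^ 3 := by positivity
  calc |auxF3 t L x| * x ^ 3
      ≤ (|L| ^ 3 * ((u ^ 3 + 3 * u ^ 2 + u) * Real.exp (-u))) * x ^ 3 :=
        mul_le_mul_of_nonneg_right h1 hx3
    _ = (|L| ^ 3 * x ^ 3) * ((u ^ 3 + 3 * u ^ 2 + u) * Real.exp (-u)) := by ring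
    _ = |Real.log u - Real.log t| ^ 3 * ((u ^ 3 + 3 * u ^ 2 + u) * Real.exp (-u)) := by
        rw [hLcube]
    _ ≤ 250000 * (1 + |Real.log t| ^ 3) := hkey

/-- Uniform Taylor remainder bound for the first `s`-derivative of `E_{λ,t}(s) = e^{-λ^s t}`:
for `0 < |h| ≤ s̄/2`,
`|E'_{λ,t}(s̄+h) - E'_{λ,t}(s̄) - h E''_{λ,t}(s̄)| ≤ C h²/s̄³ (1 + |ln t|³)`. -/
theorem stmt14 :
    ∃ C : ℝ, 0 < C ∧
      ∀ lam t sbar h : ℝ, 0 < lam → 0 < t → 0 < sbar → h ≠ 0 → |h| ≤ sbar / 2 →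
        |deriv (fun σ : ℝ => Real.exp (-(lam ^ σ) * t)) (sbar + h)
            - deriv (fun σ : ℝ => Real.exp (-(lam ^ σ) * t)) sbar
            - h * iteratedDeriv 2 (fun σ : ℝ => Real.exp (-(lam ^ σ) * t)) sbar|
          ≤ C * h ^ 2 / sbar ^ 3 * (1 + |Real.log t| ^ 3) := by
  refine ⟨2000000, by norm_num, ?_⟩
  intro lam t sbar h hlam ht hs hh hh2
  have habs0 : 0 < |h| := abs_pos.mpr hh
  set L : ℝ := Real.log lam with hL
  have hFfun : (fun σ : ℝ => Real.exp (-(lam ^ σ) * t)) = fun σ => Real.exp (-(auxW t L σ)) := by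
    funext σ
    rw [Real.rpow_def_of_pos hlam σ]
    unfold auxW
    congr 1
    ring
  -- rewrite the goal in terms of auxF1, auxF2
  have hderiv : deriv (fun σ : ℝ => Real.exp (-(lam ^ σ) * t)) = auxF1 t L := by
    rw [hFfun]; funext x; exact (auxF_hasDeriv t L x).deriv
  have hiter : iteratedDeriv 2 (fun σ : ℝ => Real.exp (-(lam ^ σ) * t)) sbar
      = auxF2 t L sbar := by
    rw [hFfun, iteratedDeriv_succ, iteratedDeriv_one]
    have hd1 : (deriv fun σ => Real.exp (-(auxW t L σ))) = auxF1 t L :=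
      funext fun x => (auxF_hasDeriv t L x).deriv
    rw [hd1]
    exact (auxF1_hasDeriv t L sbar).deriv
  rw [hderiv, hiter]
  -- the interval
  set S : Set ℝ := Set.Icc (sbar - |h|) (sbar + |h|) with hSdef
  have hxS : sbar ∈ S :=
    Set.mem_Icc.mpr ⟨by linarith [abs_nonneg h], by linarith [abs_nonneg h]⟩
  have hyS : sbar + h ∈ S :=
    Set.mem_Icc.mpr ⟨by linarith [neg_abs_le h], by linarith [le_abs_self h]⟩
  have hsb3 : (0:ℝ) < sbar ^ 3 := by positivity
  set K : ℝ := 2000000 / sbar ^ 3 * (1 + |Real.log t| ^ 3) with hKdef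
  have hK0 : 0 ≤ K := by rw [hKdef]; positivity
  have hf3bound : ∀ x ∈ S, |auxF3 t L x| ≤ K := by
    intro x hx
    have hxlb : sbar / 2 ≤ x := by
      have h1 : sbar - |h| ≤ x := hx.1
      linarith
    have hxpos : 0 < x := by linarith
    have hx3 : sbar ^ 3 / 8 ≤ x ^ 3 := by
      have hp := pow_le_pow_left₀ (by positivity : (0:ℝ) ≤ sbar / 2) hxlb 3
      nlinarith [hp]
    have hb := auxF3_bound t L x ht hxpos
    have hA0 : (0:ℝ) ≤ |auxF3 t L x| := abs_nonneg _
    have h7 : |auxF3 t L x| * (sbar ^ 3 / 8) ≤ 250000 * (1 + |Real.log t| ^ 3) := by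
      refine le_trans ?_ hb
      nlinarith [mul_nonneg hA0 (by linarith : (0:ℝ) ≤ x ^ 3 - sbar ^ 3 / 8)]
    rw [hKdef, div_mul_eq_mul_div, le_div_iff₀ hsb3]
    nlinarith
  have hconv : Convex ℝ S := convex_Icc _ _
  -- step 1: |F2 x - F2 sbar| ≤ K * |h| on S
  have hstep1 : ∀ x ∈ S, ‖auxF2 t L x - auxF2 t L sbar‖ ≤ K * |h| := by
    intro x hx
    have hmvt1 := hconv.norm_image_sub_le_of_norm_hasDerivWithin_le
      (f := auxF2 t L) (f' := auxF3 t L)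
      (fun y _ => (auxF2_hasDeriv t L y).hasDerivWithinAt)
      (fun y hy => by simpa using hf3bound y hy) hxS hx
    refine hmvt1.trans ?_
    have hxd : ‖x - sbar‖ ≤ |h| := by
      rw [Real.norm_eq_abs, abs_le]
      refine ⟨?_, ?_⟩
      · have h1 : sbar - |h| ≤ x := hx.1; linarith
      · have h2 : x ≤ sbar + |h| := hx.2; linarith
    nlinarith [norm_nonneg (x - sbar)]
  -- step 2: MVT for g := F1 - (· - sbar) * F2 sbar
  have hg : ∀ x ∈ S, HasDerivWithinAt (fun σ => auxF1 t L σ - (σ - sbar) * auxF2 t L sbar)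
      (auxF2 t L x - auxF2 t L sbar) S x := by
    intro x _
    have h1 : HasDerivAt (fun σ : ℝ => (σ - sbar) * auxF2 t L sbar) (auxF2 t L sbar) x := by
      simpa using ((hasDerivAt_id x).sub_const sbar).mul_const (auxF2 t L sbar)
    exact ((auxF1_hasDeriv t L x).sub h1).hasDerivWithinAt
  have hmvt := hconv.norm_image_sub_le_of_norm_hasDerivWithin_le hg
    (fun y hy => by simpa using hstep1 y hy) hxS hyS
  have hgval : (auxF1 t L (sbar + h) - ((sbar + h) - sbar) * auxF2 t L sbar)
      - (auxF1 t L sbar - (sbar - sbar) * auxF2 t L sbar)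
      = auxF1 t L (sbar + h) - auxF1 t L sbar - h * auxF2 t L sbar := by ring
  rw [hgval] at hmvt
  have hnorm : ‖(sbar + h) - sbar‖ = |h| := by
    rw [Real.norm_eq_abs]; congr 1; ring
  rw [hnorm, Real.norm_eq_abs] at hmvt
  refine hmvt.trans ?_
  have hh2' : |h| * |h| = h ^ 2 := by rw [← abs_mul, abs_mul_self]; ring
  have heq : K * |h| * |h| = 2000000 * h ^ 2 / sbar ^ 3 * (1 + |Real.log t| ^ 3) := by
    rw [hKdef, ← hh2']; ring
  exact heq.le
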